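/- Let G := {A ∈ M₄(ℂ) : Aᵀ B₀ A = B₀ and Aᵀ H Ā = H}. Then for every real number r ≠ 0, G acts transitively on the pseudosphere {z ∈ ℂ⁴ : ⟨z,z⟩ = r}; that is, for all z, w ∈ ℂ⁴ with ⟨z,z⟩ = ⟨w,w⟩ = r there exists A ∈ G with A z = w. (This is the paper's claim that Sp₄(B,ℂ) ∩ SU(2,2) acts transitively on pseudospheres in ℂ⁴.) -/

import Mathlib

open Matrix
/-- The Hermitian matrix of signature (2,2) in anti-diagonal form:
⟨z,z⟩ = 2Re(z₁z̄₄) + 2Re(z₂z̄₃). -/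
def H22 : Matrix (Fin 4) (Fin 4) ℂ :=
  !![0, 0, 0, 1; 0, 0, 1, 0; 0, 1, 0, 0; 1, 0, 0, 0]
/-- The matrix B₀ = [[0, E₂], [−E₂, 0]]. -/
def B0 : Matrix (Fin 4) (Fin 4) ℂ :=
  !![0, 0, 1, 0; 0, 0, 0, 1; -1, 0, 0, 0; 0, -1, 0, 0]
def Cm : Matrix (Fin 4) (Fin 4) ℂ :=
  !![0, -1, 0, 0; -1, 0, 0, 0; 0, 0, 0, 1; 0, 0, 1, 0]

lemma B0B0 : B0 * B0 = -1 := by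
  ext i j; fin_cases i <;> fin_cases j <;>
    simp [Matrix.mul_apply, Fin.sum_univ_four, Matrix.vecHead, Matrix.vecTail, B0]
lemma CmCm : Cm * Cm = 1 := by
  ext i j; fin_cases i <;> fin_cases j <;>
    simp [Matrix.mul_apply, Fin.sum_univ_four, Matrix.vecHead, Matrix.vecTail, Cm]
lemma H22Cm : H22 * Cm = B0 := by
  ext i j; fin_cases i <;> fin_cases j <;>
    simp [Matrix.mul_apply, Fin.sum_univ_four, Matrix.vecHead, Matrix.vecTail, Cm, H22, B0]
lemma B0Cm : B0 * Cm = H22 := by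
  ext i j; fin_cases i <;> fin_cases j <;>
    simp [Matrix.mul_apply, Fin.sum_univ_four, Matrix.vecHead, Matrix.vecTail, Cm, H22, B0]
lemma CmH22 : Cm * H22 = -B0 := by
  ext i j; fin_cases i <;> fin_cases j <;>
    simp [Matrix.mul_apply, Fin.sum_univ_four, Matrix.vecHead, Matrix.vecTail, Cm, H22, B0]
lemma B0H22 : B0 * H22 = -Cm := by
  ext i j; fin_cases i <;> fin_cases j <;>
    simp [Matrix.mul_apply, Fin.sum_univ_four, Matrix.vecHead, Matrix.vecTail, Cm, H22, B0]
lemma B0T : B0.transpose = -B0 := by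
  ext i j; fin_cases i <;> fin_cases j <;> simp [B0, Matrix.vecHead, Matrix.vecTail]
lemma CmT : Cm.transpose = Cm := by
  ext i j; fin_cases i <;> fin_cases j <;> simp [Cm, Matrix.vecHead, Matrix.vecTail]
lemma Cm_real : Cm.map (starRingEnd ℂ) = Cm := by
  ext i j; fin_cases i <;> fin_cases j <;> simp [Cm, Matrix.vecHead, Matrix.vecTail]

noncomputable section
open Complex

abbrev V4 := Fin 4 → ℂ

def om (x y : V4) : ℂ := dotProduct x (B0.mulVec y)

def Kc (z : V4) : V4 := Cm.mulVec (star z)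

lemma om_skew (x y : V4) : om x y = - om y x := by
  simp only [om]
  rw [Matrix.dotProduct_mulVec, ← Matrix.mulVec_transpose, B0T, Matrix.neg_mulVec,
    neg_dotProduct, dotProduct_comm]

lemma om_self (x : V4) : om x x = 0 := by
  have h := om_skew x x
  linear_combination h / 2


lemma om_add_left (x y w : V4) : om (x + y) w = om x w + om y w := by
  simp [om, add_dotProduct]

lemma om_add_right (x y w : V4) : om w (x + y) = om w x + om w y := by
  simp [om, Matrix.mulVec_add, dotProduct_add]

lemma om_smul_left (c : ℂ) (x w : V4) : om (c • x) w = c * om x w := by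
  simp [om, smul_dotProduct]

lemma om_smul_right (c : ℂ) (x w : V4) : om w (c • x) = c * om w x := by
  simp [om, Matrix.mulVec_smul, dotProduct_smul, smul_eq_mul]

lemma om_sub_left (x y w : V4) : om (x - y) w = om x w - om y w := by
  simp [om, sub_dotProduct]

lemma om_sub_right (x y w : V4) : om w (x - y) = om w x - om w y := by
  simp [om, Matrix.mulVec_sub, dotProduct_sub]

lemma CmHerm : Cmᴴ = Cm := by
  ext i j; fin_cases i <;> fin_cases j <;> simp [Cm, Matrix.vecHead, Matrix.vecTail]

lemma star_Kc (z : V4) : star (Kc z) = Cm.mulVec z := by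
  unfold Kc
  rw [Matrix.star_mulVec, CmHerm, star_star, ← Matrix.mulVec_transpose, CmT]

lemma Kc_Kc (z : V4) : Kc (Kc z) = z := by
  show Cm.mulVec (star (Kc z)) = z
  rw [star_Kc, Matrix.mulVec_mulVec, CmCm, Matrix.one_mulVec]

lemma Kc_add (x y : V4) : Kc (x + y) = Kc x + Kc y := by
  simp [Kc, Matrix.mulVec_add]

lemma Kc_sub (x y : V4) : Kc (x - y) = Kc x - Kc y := by
  simp [Kc, Matrix.mulVec_sub]

lemma Kc_smul (c : ℂ) (x : V4) : Kc (c • x) = (starRingEnd ℂ) c • Kc x := by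
  simp [Kc, star_smul, Matrix.mulVec_smul]

/-- For K-fixed vectors, om is purely imaginary-valued:
conj (om x y) = - om x y. -/
lemma om_conj (x y : V4) (hx : Kc x = x) (hy : Kc y = y) :
    (starRingEnd ℂ) (om x y) = - om x y := by
  have hsx : star x = Cm.mulVec x := by rw [← hx, star_Kc, hx]
  have hsy : star y = Cm.mulVec y := by rw [← hy, star_Kc, hy]
  have hB0H : B0ᴴ = -B0 := by
    ext i j; fin_cases i <;> fin_cases j <;> simp [B0, Matrix.vecHead, Matrix.vecTail]
  have h1 : (starRingEnd ℂ) (om x y) = (star x) ⬝ᵥ star (B0.mulVec y) := by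
    simp only [om, starRingEnd_apply]
    rw [Matrix.star_dotProduct, dotProduct_comm]
    simp [star_star]
  have h2 : star (B0.mulVec y) = B0.mulVec (star y) := by
    rw [Matrix.star_mulVec, hB0H, Matrix.vecMul_neg, ← Matrix.mulVec_transpose, B0T,
      Matrix.neg_mulVec, neg_neg]
  have hH22T : H22ᵀ = H22 := by
    ext i j; fin_cases i <;> fin_cases j <;> simp [H22, Matrix.vecHead, Matrix.vecTail]
  rw [h1, h2, hsx, hsy, Matrix.mulVec_mulVec, B0Cm, Matrix.dotProduct_mulVec,
    ← Matrix.mulVec_transpose, hH22T, Matrix.mulVec_mulVec, H22Cm,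
    dotProduct_comm]
  rw [show (y ⬝ᵥ B0 *ᵥ x) = om y x from rfl, om_skew]

/-- Symplectic projection onto the complement of span(u,v). -/
def pr (u v x : V4) : V4 := x + (Complex.I * om x v) • u - (Complex.I * om x u) • v

section PiLemmas
variable (u v : V4) (huv : om u v = Complex.I)

include huv

lemma om_pr_u (x : V4) : om (pr u v x) u = 0 := by
  have hvu : om v u = -Complex.I := by rw [om_skew, huv]
  simp only [pr, om_add_left, om_sub_left, om_smul_left, om_self, hvu]
  linear_combination (om x u) * Complex.I_sq

lemma om_pr_v (x : V4) : om (pr u v x) v = 0 := by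
  simp only [pr, om_add_left, om_sub_left, om_smul_left, om_self, huv]
  linear_combination (om x v) * Complex.I_sq

lemma om_pr_pr (x y : V4) : om (pr u v x) (pr u v y) = om (pr u v x) y := by
  simp only [pr, om_add_right, om_sub_right, om_smul_right]
  rw [show (x + (Complex.I * om x v) • u - (Complex.I * om x u) • v) = pr u v x from rfl]
  rw [om_pr_u u v huv, om_pr_v u v huv]
  ring

lemma om_u_pr (x : V4) : om u (pr u v x) = 0 := by
  rw [om_skew, om_pr_u u v huv, neg_zero]

lemma om_v_pr (x : V4) : om v (pr u v x) = 0 := by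
  rw [om_skew, om_pr_v u v huv, neg_zero]

omit huv in
lemma Kc_pr (x : V4) (hKu : Kc u = u) (hKv : Kc v = v) (hKx : Kc x = x) :
    Kc (pr u v x) = pr u v x := by
  unfold pr
  rw [Kc_sub, Kc_add, Kc_smul, Kc_smul, hKu, hKv, hKx]
  rw [RingHom.map_mul, RingHom.map_mul, Complex.conj_I, om_conj x v hKx hKv,
    om_conj x u hKx hKu]
  ring_nf

end PiLemmas

open Complex in
def Fm : Matrix (Fin 4) (Fin 4) ℂ :=
  !![1, I, 0, 0; -1, I, 0, 0; 0, 0, 1, I; 0, 0, 1, -I]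

open Complex in
def Fi : Matrix (Fin 4) (Fin 4) ℂ :=
  !![1/2, -(1/2), 0, 0; -(I/2), -(I/2), 0, 0; 0, 0, 1/2, 1/2; 0, 0, -(I/2), I/2]

lemma FmFi : Fm * Fi = 1 := by
  ext i j; fin_cases i <;> fin_cases j <;>
    simp [Matrix.mul_apply, Fin.sum_univ_four, Matrix.vecHead, Matrix.vecTail, Fm, Fi] <;>
    field_simp <;> ring_nf <;> simp [Complex.I_sq] <;> ring

lemma FiFm : Fi * Fm = 1 := by
  ext i j; fin_cases i <;> fin_cases j <;>
    simp [Matrix.mul_apply, Fin.sum_univ_four, Matrix.vecHead, Matrix.vecTail, Fm, Fi] <;>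
    field_simp <;> ring_nf <;> simp [Complex.I_sq] <;> ring

def fb (a : Fin 4) : V4 := fun i => Fm i a

lemma Kc_fb (a : Fin 4) : Kc (fb a) = fb a := by
  funext i
  fin_cases a <;> fin_cases i <;>
    simp [Kc, fb, Matrix.mulVec, dotProduct, Fin.sum_univ_four, Cm, Fm,
      Matrix.vecHead, Matrix.vecTail]

def Gf : Matrix (Fin 4) (Fin 4) ℂ :=
  !![0, 0, 0, 2*Complex.I; 0, 0, 2*Complex.I, 0;
     0, -(2*Complex.I), 0, 0; -(2*Complex.I), 0, 0, 0]

lemma om_fb (a b : Fin 4) : om (fb a) (fb b) = Gf a b := by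
  fin_cases a <;> fin_cases b <;>
    simp [om, fb, Matrix.mulVec, dotProduct, Fin.sum_univ_four, B0, Fm, Gf,
      Matrix.vecHead, Matrix.vecTail] <;> ring

open Complex in
/-- Matrix of the projection `pr u v`. -/
def Pm (u v : V4) : Matrix (Fin 4) (Fin 4) ℂ :=
  1 + Complex.I • Matrix.vecMulVec u (B0.mulVec v) - Complex.I • Matrix.vecMulVec v (B0.mulVec u)

lemma Pm_mulVec (u v x : V4) : (Pm u v).mulVec x = pr u v x := by
  funext i
  simp [Pm, pr, Matrix.add_mulVec, Matrix.sub_mulVec, Matrix.smul_mulVec,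
    Matrix.mulVec, dotProduct, Matrix.vecMulVec_apply, om, Fin.sum_univ_four,
    Matrix.one_apply, B0, Matrix.vecHead, Matrix.vecTail]
  fin_cases i <;> simp [Matrix.vecHead, Matrix.vecTail] <;> ring

lemma exists_good (u v : V4) (huv : om u v = Complex.I) :
    ∃ a : Fin 4, pr u v (fb a) ≠ 0 := by
  by_contra h
  push_neg at h
  have hPF : Pm u v * Fm = 0 := by
    ext i j
    have : (Pm u v * Fm) i j = ((Pm u v).mulVec (fb j)) i := by
      simp [Matrix.mul_apply, Matrix.mulVec, dotProduct, fb]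
    rw [this, Pm_mulVec, h j]
    simp
  have hP0 : Pm u v = 0 := by
    calc Pm u v = Pm u v * (Fm * Fi) := by rw [FmFi, mul_one]
    _ = (Pm u v * Fm) * Fi := by rw [mul_assoc]
    _ = 0 := by rw [hPF, zero_mul]
  have htr : Matrix.trace (Pm u v) = 2 := by
    have h1 : Matrix.trace (Pm u v)
        = 4 + Complex.I * om u v - Complex.I * om v u := by
      simp [Pm, Matrix.trace, Matrix.diag, Fin.sum_univ_four, Matrix.vecMulVec_apply,
        Matrix.one_apply, om, Matrix.mulVec, dotProduct, B0,
        Matrix.vecHead, Matrix.vecTail]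
      ring
    rw [h1, huv, om_skew, huv]
    linear_combination (2:ℂ) * Complex.I_mul_I
  rw [hP0] at htr
  simp at htr

def G0 : Matrix (Fin 4) (Fin 4) ℂ := (-Complex.I) • H22

lemma H22Herm : H22ᴴ = H22 := by
  ext i j; fin_cases i <;> fin_cases j <;> simp [H22, Matrix.vecHead, Matrix.vecTail]

lemma H22T' : H22ᵀ = H22 := by
  ext i j; fin_cases i <;> fin_cases j <;> simp [H22, Matrix.vecHead, Matrix.vecTail]

lemma star_fix (x : V4) (hx : Kc x = x) : star x = Cm.mulVec x := by
  rw [← hx, star_Kc, hx]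

lemma Kc_G0 (x : V4) (hx : Kc x = x) : Kc (G0.mulVec x) = G0.mulVec x := by
  unfold Kc G0
  rw [Matrix.smul_mulVec, star_smul, Matrix.star_mulVec, H22Herm,
    star_fix x hx]
  have : star (-Complex.I) = Complex.I := by simp
  rw [this, Matrix.mulVec_smul]
  rw [show ((Cm.mulVec x) ᵥ* H22) = H22ᵀ.mulVec (Cm.mulVec x) from
    (Matrix.mulVec_transpose H22 _).symm.trans rfl]
  rw [H22T', Matrix.mulVec_mulVec, Matrix.mulVec_mulVec, CmH22]
  rw [show (-B0) * Cm = -(B0 * Cm) from neg_mul B0 Cm, B0Cm]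
  rw [Matrix.neg_mulVec]
  simp [smul_smul]

lemma om_G0 (x : V4) (hx : Kc x = x) :
    om x (G0.mulVec x) = Complex.I * (dotProduct x (star x)) := by
  unfold om G0
  rw [Matrix.smul_mulVec, Matrix.mulVec_smul, dotProduct_smul,
    Matrix.mulVec_mulVec, B0H22, Matrix.neg_mulVec, dotProduct_neg,
    star_fix x hx]
  simp [smul_eq_mul]
  try ring

lemma dot_star_self_real (x : V4) :
    (starRingEnd ℂ) (dotProduct x (star x)) = dotProduct x (star x) := by
  rw [starRingEnd_apply, ← Matrix.star_dotProduct_star, star_star]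

open scoped ComplexOrder in
lemma dot_star_self_ne_zero (x : V4) (hx : x ≠ 0) :
    dotProduct x (star x) ≠ 0 := by
  rw [dotProduct_comm]
  exact fun h => hx (dotProduct_star_self_eq_zero.mp h)

/-- Membership in Sp₄(B₀,ℂ) ∩ U(2,2). -/
def SpU (A : Matrix (Fin 4) (Fin 4) ℂ) : Prop :=
  A.transpose * B0 * A = B0 ∧ A.transpose * H22 * A.map (starRingEnd ℂ) = H22

lemma SpU_mul {A B : Matrix (Fin 4) (Fin 4) ℂ} (hA : SpU A) (hB : SpU B) :
    SpU (A * B) := by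
  obtain ⟨hA1, hA2⟩ := hA
  obtain ⟨hB1, hB2⟩ := hB
  constructor
  · calc (A * B)ᵀ * B0 * (A * B) = Bᵀ * (Aᵀ * B0 * A) * B := by
          rw [Matrix.transpose_mul]; noncomm_ring
    _ = B0 := by rw [hA1, hB1]
  · calc (A * B)ᵀ * H22 * (A * B).map (starRingEnd ℂ)
        = Bᵀ * (Aᵀ * H22 * A.map (starRingEnd ℂ)) * B.map (starRingEnd ℂ) := by
          rw [Matrix.transpose_mul, Matrix.map_mul]; noncomm_ring
    _ = H22 := by rw [hA2, hB2]

lemma SpU_inv {A : Matrix (Fin 4) (Fin 4) ℂ} (hA : SpU A) :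
    SpU (-(B0 * A.transpose * B0)) ∧ (-(B0 * A.transpose * B0)) * A = 1 := by
  obtain ⟨hA1, hA2⟩ := hA
  set A' : Matrix (Fin 4) (Fin 4) ℂ := -(B0 * A.transpose * B0) with hA'
  have hinv : A' * A = 1 := by
    rw [hA']
    calc -(B0 * Aᵀ * B0) * A = -(B0 * (Aᵀ * B0 * A)) := by noncomm_ring
    _ = -(B0 * B0) := by rw [hA1]
    _ = 1 := by rw [B0B0]; simp
  have hinv' : A * A' = 1 := mul_eq_one_comm.mp hinv
  have hc : (A * A').map (starRingEnd ℂ) = 1 := by rw [hinv']; simp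
  rw [Matrix.map_mul] at hc
  refine ⟨⟨?_, ?_⟩, hinv⟩
  · calc A'ᵀ * B0 * A' = A'ᵀ * (Aᵀ * B0 * A) * A' := by rw [hA1]
    _ = (A * A')ᵀ * B0 * (A * A') := by rw [Matrix.transpose_mul]; noncomm_ring
    _ = B0 := by rw [hinv']; simp
  · calc A'ᵀ * H22 * A'.map (starRingEnd ℂ)
        = A'ᵀ * (Aᵀ * H22 * A.map (starRingEnd ℂ)) * A'.map (starRingEnd ℂ) := by rw [hA2]
    _ = (A * A')ᵀ * H22 * (A.map (starRingEnd ℂ) * A'.map (starRingEnd ℂ)) := by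
          rw [Matrix.transpose_mul]; noncomm_ring
    _ = H22 := by rw [hinv', hc]; simp

def zrv (r : ℝ) : V4 := ![1, -1, -((r:ℂ)/4), (r:ℂ)/4]

lemma gram_apply (X : Matrix (Fin 4) (Fin 4) ℂ) (i j : Fin 4) :
    (X.transpose * B0 * X) i j = om (fun k => X k i) (fun k => X k j) := by
  simp [Matrix.mul_apply, om, Matrix.mulVec, dotProduct, Fin.sum_univ_four,
    Matrix.transpose_apply, B0, Matrix.vecHead, Matrix.vecTail]
  ring

lemma reach (r : ℝ) (hr : r ≠ 0) (z : V4)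
    (hz : dotProduct z (H22.mulVec (star z)) = (r : ℂ)) :
    ∃ Az : Matrix (Fin 4) (Fin 4) ℂ, SpU Az ∧ Az.mulVec (zrv r) = z := by
  have hrC : (r : ℂ) ≠ 0 := by exact_mod_cast hr
  have hIr : Complex.I * r ≠ 0 := mul_ne_zero Complex.I_ne_zero hrC
  -- the pairing of z with Kz
  have e1 : om z (Kc z) = (r : ℂ) := by
    rw [om, Kc, Matrix.mulVec_mulVec, B0Cm]; exact hz
  have e2 : om (Kc z) z = -(r : ℂ) := by rw [om_skew, e1]
  set u : V4 := (1/2 : ℂ) • (z + Kc z) with hu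
  set v : V4 := (-Complex.I / r) • (z - Kc z) with hv
  have hKu : Kc u = u := by
    rw [hu, Kc_smul, Kc_add, Kc_Kc]
    rw [show (starRingEnd ℂ) (1/2 : ℂ) = 1/2 from by rw [map_div₀, _root_.map_one, map_ofNat]]
    funext i; simp [Pi.add_apply]; ring
  have hKv : Kc v = v := by
    rw [hv, Kc_smul, Kc_sub, Kc_Kc]
    have hc : (starRingEnd ℂ) (-Complex.I / r) = -(-Complex.I / r) := by
      rw [map_div₀, map_neg, Complex.conj_I, Complex.conj_ofReal]
      ring
    rw [hc]
    funext i
    simp [Pi.smul_apply, Pi.sub_apply, smul_eq_mul]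
    ring
  have huv : om u v = Complex.I := by
    rw [hu, hv, om_smul_left, om_smul_right, om_add_left, om_sub_right, om_sub_right,
      om_self, e1, om_skew (Kc z) (Kc z), om_self, e2]
    rw [show ((0:ℂ) - (r:ℂ) + (-(r:ℂ) - -0)) = -(2*(r:ℂ)) from by ring]
    rw [show (1:ℂ)/2 * (-Complex.I/(r:ℂ) * -(2*(r:ℂ))) = Complex.I * ((r:ℂ)/(r:ℂ)) from by
      ring]
    rw [div_self hrC, mul_one]
  have hz_dec : z = u + ((Complex.I * r)/2) • v := by
    rw [hu, hv, smul_smul]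
    have : (Complex.I * r)/2 * (-Complex.I/r) = (1/2 : ℂ) := by
      rw [div_mul_div_comm,
        show Complex.I * (r:ℂ) * -Complex.I = (r:ℂ) from by
          linear_combination (-(r:ℂ)) * Complex.I_mul_I]
      rw [show ((2:ℂ) * (r:ℂ)) = (r:ℂ) * 2 from by ring, ← div_div, div_self hrC]
    rw [this]
    funext i
    simp [Pi.add_apply, Pi.smul_apply, Pi.sub_apply, smul_eq_mul]
    ring
  obtain ⟨a, ha⟩ := exists_good u v huv
  set m1 : V4 := pr u v (fb a) with hm1
  have hKm1 : Kc m1 = m1 := Kc_pr u v (fb a) hKu hKv (Kc_fb a)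
  set ν : ℂ := dotProduct m1 (star m1) with hν
  have hν0 : ν ≠ 0 := dot_star_self_ne_zero m1 ha
  have hνc : (starRingEnd ℂ) ν = ν := dot_star_self_real m1
  set m2 : V4 := (2/ν) • pr u v (G0.mulVec m1) with hm2
  have hKm2 : Kc m2 = m2 := by
    rw [hm2, Kc_smul]
    rw [show (starRingEnd ℂ) (2/ν) = 2/ν by
      rw [map_div₀, hνc, show (starRingEnd ℂ) (2:ℂ) = 2 from map_ofNat _ 2]]
    rw [Kc_pr u v _ hKu hKv (Kc_G0 m1 hKm1)]
  -- the Gram facts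
  have gm1u : om m1 u = 0 := om_pr_u u v huv (fb a)
  have gm1v : om m1 v = 0 := om_pr_v u v huv (fb a)
  have gum1 : om u m1 = 0 := om_u_pr u v huv (fb a)
  have gvm1 : om v m1 = 0 := om_v_pr u v huv (fb a)
  have gm2u : om m2 u = 0 := by rw [hm2, om_smul_left, om_pr_u u v huv]; ring
  have gm2v : om m2 v = 0 := by rw [hm2, om_smul_left, om_pr_v u v huv]; ring
  have gum2 : om u m2 = 0 := by rw [om_skew, gm2u, neg_zero]
  have gvm2 : om v m2 = 0 := by rw [om_skew, gm2v, neg_zero]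
  have gm1m2 : om m1 m2 = 2 * Complex.I := by
    rw [hm2, om_smul_right, hm1, om_pr_pr u v huv, ← hm1, om_G0 m1 hKm1, ← hν]
    field_simp
  have gm2m1 : om m2 m1 = -(2 * Complex.I) := by rw [om_skew, gm1m2]
  have guv2 : om u ((2:ℂ) • v) = 2 * Complex.I := by rw [om_smul_right, huv]
  have gv2u : om ((2:ℂ) • v) u = -(2 * Complex.I) := by rw [om_skew, guv2]
  have gm1v2 : om m1 ((2:ℂ) • v) = 0 := by rw [om_smul_right, gm1v, mul_zero]
  have gv2m1 : om ((2:ℂ) • v) m1 = 0 := by rw [om_skew, gm1v2, neg_zero]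
  have gm2v2 : om m2 ((2:ℂ) • v) = 0 := by rw [om_smul_right, gm2v, mul_zero]
  have gv2m2 : om ((2:ℂ) • v) m2 = 0 := by rw [om_skew, gm2v2, neg_zero]
  set g : Fin 4 → V4 := ![u, m1, m2, (2:ℂ) • v] with hg
  have hKv2 : Kc ((2:ℂ) • v) = (2:ℂ) • v := by
    rw [Kc_smul, show (starRingEnd ℂ) (2:ℂ) = 2 from map_ofNat _ 2, hKv]
  have hgfix : ∀ j, Kc (g j) = g j := by
    intro j
    fin_cases j
    · exact hKu
    · exact hKm1
    · exact hKm2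
    · exact hKv2
  have hgram : ∀ i j, om (g i) (g j) = Gf i j := by
    intro i j
    fin_cases i <;> fin_cases j
    · exact om_self _
    · exact gum1
    · exact gum2
    · exact guv2
    · exact gm1u
    · exact om_self _
    · exact gm1m2
    · exact gm1v2
    · exact gm2u
    · exact gm2m1
    · exact om_self _
    · exact gm2v2
    · exact gv2u
    · exact gv2m1
    · exact gv2m2
    · exact om_self _
  set Gmat : Matrix (Fin 4) (Fin 4) ℂ := Matrix.of (fun i j => g j i) with hGmat
  have hG1 : Gmat.transpose * B0 * Gmat = Gf := by
    ext i j
    rw [_root_.gram_apply]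
    exact hgram i j
  have hF1 : Fm.transpose * B0 * Fm = Gf := by
    ext i j
    rw [_root_.gram_apply]
    exact om_fb i j
  have hGc : Gmat.map (starRingEnd ℂ) = Cm * Gmat := by
    ext i j
    have h1 := congrFun (star_fix (g j) (hgfix j)) i
    simp only [Pi.star_apply] at h1
    simp only [Matrix.map_apply, hGmat, Matrix.of_apply, Matrix.mul_apply]
    rw [starRingEnd_apply, h1]
    simp [Matrix.mulVec, dotProduct]
  have hFc : Fm.map (starRingEnd ℂ) = Cm * Fm := by
    ext i j
    have h1 := congrFun (star_fix (fb j) (Kc_fb j)) i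
    simp only [Pi.star_apply] at h1
    simp only [Matrix.map_apply, Matrix.mul_apply]
    rw [starRingEnd_apply, show Fm i j = fb j i from rfl, h1]
    simp [Matrix.mulVec, dotProduct, fb]
  have hFic : Fi.map (starRingEnd ℂ) = Fi * Cm := by
    have h1 : (Fi.map (starRingEnd ℂ)) * (Cm * Fm) = 1 := by
      rw [← hFc, ← Matrix.map_mul, FiFm]
      exact Matrix.map_one _ (map_zero _) (_root_.map_one _)
    have h2 : (Cm * Fm) * (Fi * Cm) = 1 := by
      calc Cm * Fm * (Fi * Cm) = Cm * (Fm * Fi) * Cm := by noncomm_ring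
      _ = 1 := by rw [FmFi, mul_one, CmCm]
    calc Fi.map (starRingEnd ℂ) = Fi.map (starRingEnd ℂ) * ((Cm * Fm) * (Fi * Cm)) := by
          rw [h2, mul_one]
    _ = (Fi.map (starRingEnd ℂ) * (Cm * Fm)) * (Fi * Cm) := by noncomm_ring
    _ = Fi * Cm := by rw [h1, one_mul]
  set Az : Matrix (Fin 4) (Fin 4) ℂ := Gmat * Fi with hAz
  have hsymp : Az.transpose * B0 * Az = B0 := by
    calc Azᵀ * B0 * Az = Fiᵀ * (Gmatᵀ * B0 * Gmat) * Fi := by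
          rw [hAz, Matrix.transpose_mul]; noncomm_ring
    _ = Fiᵀ * (Fmᵀ * B0 * Fm) * Fi := by rw [hG1, hF1]
    _ = (Fm * Fi)ᵀ * B0 * (Fm * Fi) := by rw [Matrix.transpose_mul]; noncomm_ring
    _ = B0 := by rw [FmFi]; simp
  have hAzc : Az.map (starRingEnd ℂ) = Cm * Az * Cm := by
    rw [hAz, Matrix.map_mul, hGc, hFic]
    noncomm_ring
  have hherm : Az.transpose * H22 * Az.map (starRingEnd ℂ) = H22 := by
    rw [hAzc]
    calc Azᵀ * H22 * (Cm * Az * Cm) = (Azᵀ * (H22 * Cm) * Az) * Cm := by noncomm_ring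
    _ = (Azᵀ * B0 * Az) * Cm := by rw [H22Cm]
    _ = H22 := by rw [hsymp, B0Cm]
  refine ⟨Az, ⟨hsymp, hherm⟩, ?_⟩
  have hzr : zrv r = fb 0 + ((Complex.I * r)/4) • fb 3 := by
    funext i
    fin_cases i
    · simp [zrv, fb, Fm, Matrix.vecHead, Matrix.vecTail]
    · simp [zrv, fb, Fm, Matrix.vecHead, Matrix.vecTail]
    · simp [zrv, fb, Fm, Matrix.vecHead, Matrix.vecTail]
      linear_combination (-(r:ℂ)/4) * Complex.I_sq
    · simp [zrv, fb, Fm, Matrix.vecHead, Matrix.vecTail]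
      linear_combination ((r:ℂ)/4) * Complex.I_sq
  have hcol : ∀ j : Fin 4, Az.mulVec (fb j) = g j := by
    intro j
    have h1 : Az.mulVec (fb j) = fun i => (Az * Fm) i j := by
      funext i
      simp [Matrix.mulVec, dotProduct, Matrix.mul_apply, fb]
    have h2 : Az * Fm = Gmat := by
      rw [hAz, mul_assoc, FiFm, mul_one]
    rw [h1, h2]
    rfl
  rw [hzr, Matrix.mulVec_add, Matrix.mulVec_smul, hcol 0, hcol 3]
  have hg0 : g 0 = u := rfl
  have hg3 : g 3 = (2:ℂ) • v := rfl
  rw [hg0, hg3, hz_dec]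
  funext i
  simp only [Pi.add_apply, Pi.smul_apply, smul_eq_mul]
  ring

/-- The group G = Sp₄(B₀,ℂ) ∩ SU(2,2) acts transitively on every pseudosphere
{z ∈ ℂ⁴ : ⟨z,z⟩ = r}, r ≠ 0. -/
theorem stmt8 (r : ℝ) (hr : r ≠ 0) (z w : Fin 4 → ℂ)
    (hz : dotProduct z (H22.mulVec (star z)) = (r : ℂ))
    (hw : dotProduct w (H22.mulVec (star w)) = (r : ℂ)) :
    ∃ A : Matrix (Fin 4) (Fin 4) ℂ,
      A.transpose * B0 * A = B0 ∧
      A.transpose * H22 * A.map (starRingEnd ℂ) = H22 ∧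
      A.mulVec z = w := by
  obtain ⟨Az, hAzSp, hAzv⟩ := reach r hr z hz
  obtain ⟨Aw, hAwSp, hAwv⟩ := reach r hr w hw
  obtain ⟨hAiSp, hAi⟩ := SpU_inv hAzSp
  have hmul := SpU_mul hAwSp hAiSp
  refine ⟨Aw * (-(B0 * Az.transpose * B0)), hmul.1, hmul.2, ?_⟩
  have h1 : (-(B0 * Az.transpose * B0)).mulVec z = zrv r := by
    rw [← hAzv, Matrix.mulVec_mulVec, hAi, Matrix.one_mulVec]
  rw [← Matrix.mulVec_mulVec, h1, hAwv]
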